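/- For every α ∈ [0,1] and y > 0, the function h(y) = e^{2y}(α²y² − 2αy + 2) − e^y(αy² − 2αy + 4) + 2 is nonnegative. -/
import Mathlib

theorem stmt_2 (α y : ℝ) (h0 : 0 ≤ α) (h1 : α ≤ 1) (hy : 0 < y) :
    0 ≤ Real.exp (2 * y) * (α ^ 2 * y ^ 2 - 2 * α * y + 2)
        - Real.exp y * (α * y ^ 2 - 2 * α * y + 4) + 2 := by
  set E := Real.exp y with hE
  have hEpos : 0 < E := Real.exp_pos y
  have hE2 : Real.exp (2 * y) = E ^ 2 := by
    rw [hE, ← Real.exp_nat_mul]; ring_nf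
  have hE3 : 1 + y + y ^ 2 / 2 + y ^ 3 / 6 ≤ E := by
    have := Real.sum_le_exp_of_nonneg hy.le 4
    simp [Finset.sum_range_succ, Nat.factorial] at this
    rw [hE]; linarith
  rw [hE2]
  have hq1 : 0 ≤ (E - 1) * (E * (y ^ 2 - 2 * y + 2) - 2) := by
    have h1' : (0:ℝ) ≤ E - 1 := by nlinarith
    have h2' : (0:ℝ) ≤ E * (y ^ 2 - 2 * y + 2) - 2 := by nlinarith [sq_nonneg y, sq_nonneg (y^2), pow_pos hy 3, pow_pos hy 4]
    exact mul_nonneg h1' h2'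
  rcases le_or_gt y (3/5) with hc | hc
  · -- small y : slope at α = 1 is nonpositive
    have hslope : 2 * E * (y - 1) + 2 - y ≤ 0 := by
      nlinarith [pow_pos hy 3, sq_nonneg y]
    have hB : 0 ≤ (E * y * (2 * E * (y - 1) + 2 - y)) * (α - 1) := by
      have ha : E * y * (2 * E * (y - 1) + 2 - y) ≤ 0 :=
        mul_nonpos_of_nonneg_of_nonpos (by positivity) hslope
      have hb : α - 1 ≤ 0 := by linarith
      nlinarith [mul_nonneg (neg_nonneg.2 ha) (neg_nonneg.2 hb)]
    have hA : 0 ≤ E ^ 2 * y ^ 2 * (α - 1) ^ 2 := by positivity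
    have hid : E ^ 2 * (α ^ 2 * y ^ 2 - 2 * α * y + 2) - E * (α * y ^ 2 - 2 * α * y + 4) + 2
        = E ^ 2 * y ^ 2 * (α - 1) ^ 2 + (E * y * (2 * E * (y - 1) + 2 - y)) * (α - 1)
          + (E - 1) * (E * (y ^ 2 - 2 * y + 2) - 2) := by ring
    rw [hid]; linarith
  · -- large y : discriminant is nonpositive
    have hu : 121 * y ≤ 100 * (E - 1) := by
      nlinarith [sq_nonneg y]
    have hdisc : (2 * (E - 1) + y) ^ 2 ≤ 8 * (E - 1) ^ 2 := by
      nlinarith [sq_nonneg (E - 1), sq_nonneg y]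
    have hkey : 0 ≤ 4 * (E ^ 2 * y ^ 2) *
        (E ^ 2 * (α ^ 2 * y ^ 2 - 2 * α * y + 2) - E * (α * y ^ 2 - 2 * α * y + 4) + 2) := by
      nlinarith [sq_nonneg (2 * E ^ 2 * y ^ 2 * α - E * y * (2 * E + y - 2)),
        mul_nonneg (mul_nonneg (sq_nonneg E) (sq_nonneg y)) (sub_nonneg.2 hdisc),
        sq_nonneg (E * y)]
    nlinarith [hkey, mul_pos (mul_pos hEpos hEpos) (mul_pos hy hy)]
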